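/- Let H be a finite-dimensional (nonzero) Hilbert space over ℝ or ℂ and let {τ_j}_{j=1}^n and {ω_j}_{j=1}^n be two orthonormal bases for H. Then for every h ∈ H with ⟨h, τ_j⟩ ≠ 0 for all 1≤j≤n and ⟨h, ω_j⟩ ≠ 0 for all 1≤j≤n, S_τ(h) + S_ω(h) ≥ -2 log( (1 + max_{1≤j,k≤n} |⟨τ_j, ω_k⟩|) / 2 ). -/

import Mathlib

open Finset

section Aux

variable {𝕜 H : Type*} [RCLike 𝕜] [NormedAddCommGroup H] [InnerProductSpace 𝕜 H]

lemma aux_parseval {n : ℕ} (b : OrthonormalBasis (Fin n) 𝕜 H) (u : H) :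
    ∑ j, ‖(inner 𝕜 u (b j) : 𝕜)‖ ^ 2 = ‖u‖ ^ 2 := by
  calc ∑ j, ‖(inner 𝕜 u (b j) : 𝕜)‖ ^ 2 = ∑ j, ‖b.repr u j‖ ^ 2 := by
        refine Finset.sum_congr rfl fun j _ => ?_
        rw [b.repr_apply_apply, norm_inner_symm]
    _ = ‖b.repr u‖ ^ 2 := by
        rw [EuclideanSpace.norm_eq, Real.sq_sqrt (by positivity)]
    _ = ‖u‖ ^ 2 := by rw [b.repr.norm_map]

lemma aux_key (u x y : H) (hu : ‖u‖ = 1) (hx : ‖x‖ = 1) (hy : ‖y‖ = 1) :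
    ‖(inner 𝕜 u x : 𝕜)‖ * ‖(inner 𝕜 u y : 𝕜)‖ ≤ (1 + ‖(inner 𝕜 x y : 𝕜)‖) / 2 := by
  have ht : (0:ℝ) ≤ ‖(inner 𝕜 x y : 𝕜)‖ := norm_nonneg _
  by_cases ha : (inner 𝕜 u x : 𝕜) = 0
  · rw [ha]; simp; linarith
  by_cases hc : (inner 𝕜 u y : 𝕜) = 0
  · rw [hc]; simp; linarith
  set a : 𝕜 := inner 𝕜 u x with ha_def
  set c : 𝕜 := inner 𝕜 u y with hc_def
  set α : 𝕜 := (‖a‖ : 𝕜) / a with hα_def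
  set β : 𝕜 := (‖c‖ : 𝕜) / c with hβ_def
  have hαa : α * a = (‖a‖ : 𝕜) := by rw [hα_def, div_mul_cancel₀ _ ha]
  have hβc : β * c = (‖c‖ : 𝕜) := by rw [hβ_def, div_mul_cancel₀ _ hc]
  have hα : ‖α‖ = 1 := by
    rw [hα_def, norm_div, RCLike.norm_ofReal, abs_of_nonneg (norm_nonneg a),
      div_self (norm_ne_zero_iff.mpr ha)]
  have hβ : ‖β‖ = 1 := by
    rw [hβ_def, norm_div, RCLike.norm_ofReal, abs_of_nonneg (norm_nonneg c),
      div_self (norm_ne_zero_iff.mpr hc)]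
  have hs : ‖a‖ + ‖c‖ ≤ ‖α • x + β • y‖ := by
    have h1 : (inner 𝕜 u (α • x + β • y) : 𝕜) = ((‖a‖ : ℝ) + (‖c‖ : ℝ) : ℝ) := by
      rw [inner_add_right, inner_smul_right, inner_smul_right, ← ha_def, ← hc_def,
        hαa, hβc]
      push_cast
      ring
    calc ‖a‖ + ‖c‖ = RCLike.re ((inner 𝕜 u (α • x + β • y) : 𝕜)) := by
          rw [h1, RCLike.ofReal_re]
      _ ≤ ‖(inner 𝕜 u (α • x + β • y) : 𝕜)‖ := RCLike.re_le_norm _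
      _ ≤ ‖u‖ * ‖α • x + β • y‖ := norm_inner_le_norm _ _
      _ = ‖α • x + β • y‖ := by rw [hu, one_mul]
  have hnsq : ‖α • x + β • y‖ ^ 2 ≤ 2 + 2 * ‖(inner 𝕜 x y : 𝕜)‖ := by
    rw [@norm_add_sq 𝕜]
    have h2 : ‖(inner 𝕜 (α • x) (β • y) : 𝕜)‖ = ‖(inner 𝕜 x y : 𝕜)‖ := by
      rw [inner_smul_left, inner_smul_right, norm_mul, norm_mul, RCLike.norm_conj,
        hα, hβ]
      ring
    have h3 := RCLike.re_le_norm (inner 𝕜 (α • x) (β • y) : 𝕜)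
    rw [h2] at h3
    rw [norm_smul, hα, one_mul, hx, norm_smul, hβ, one_mul, hy]
    nlinarith
  have hna : (0:ℝ) ≤ ‖a‖ := norm_nonneg _
  have hnc : (0:ℝ) ≤ ‖c‖ := norm_nonneg _
  have hnn : (0:ℝ) ≤ ‖α • x + β • y‖ := norm_nonneg _
  nlinarith [sq_nonneg (‖a‖ - ‖c‖), mul_le_mul hs hs (by linarith) hnn]

lemma aux_entropy {n m : ℕ} (p : Fin n → ℝ) (q : Fin m → ℝ)
    (hp : ∀ j, 0 < p j) (hq : ∀ k, 0 < q k)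
    (hp1 : ∑ j, p j = 1) (hq1 : ∑ k, q k = 1)
    {M : ℝ} (hM : 0 < M) (hkey : ∀ j k, p j * q k ≤ M ^ 2) :
    (-∑ j, p j * Real.log (p j)) + (-∑ k, q k * Real.log (q k)) ≥ -2 * Real.log M := by
  have e1 : ∑ j, ∑ k, p j * q k * Real.log (p j * q k)
      = (∑ j, p j * Real.log (p j)) + (∑ k, q k * Real.log (q k)) := by
    have estep : ∀ j : Fin n, ∀ k : Fin m, p j * q k * Real.log (p j * q k)
        = (p j * Real.log (p j)) * q k + p j * (q k * Real.log (q k)) := by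
      intro j k
      rw [Real.log_mul (hp j).ne' (hq k).ne']
      ring
    calc ∑ j, ∑ k, p j * q k * Real.log (p j * q k)
        = ∑ j, ((p j * Real.log (p j)) * ∑ k, q k
            + p j * ∑ k, (q k * Real.log (q k))) := by
          refine Finset.sum_congr rfl fun j _ => ?_
          rw [Finset.mul_sum, Finset.mul_sum, ← Finset.sum_add_distrib]
          exact Finset.sum_congr rfl fun k _ => estep j k
      _ = (∑ j, p j * Real.log (p j)) + (∑ k, q k * Real.log (q k)) := by
          simp_rw [hq1, mul_one]
          rw [Finset.sum_add_distrib, ← Finset.sum_mul, hp1, one_mul]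
  have e2 : ∑ j, ∑ k, p j * q k * Real.log (p j * q k) ≤ 2 * Real.log M := by
    calc ∑ j, ∑ k, p j * q k * Real.log (p j * q k)
        ≤ ∑ j, ∑ k, p j * q k * (2 * Real.log M) := by
          refine Finset.sum_le_sum fun j _ => Finset.sum_le_sum fun k _ => ?_
          have hpq : 0 < p j * q k := mul_pos (hp j) (hq k)
          have hlog : Real.log (p j * q k) ≤ 2 * Real.log M := by
            have := Real.log_le_log hpq (hkey j k)
            rwa [Real.log_pow, Nat.cast_ofNat] at this
          exact mul_le_mul_of_nonneg_left hlog hpq.le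
      _ = 2 * Real.log M := by
          simp_rw [mul_assoc, ← Finset.mul_sum]
          rw [← Finset.sum_mul, hp1, one_mul, ← Finset.sum_mul, hq1, one_mul]
  linarith [e1 ▸ e2]

end Aux

theorem stmt_7 {𝕜 H : Type*} [RCLike 𝕜] [NormedAddCommGroup H] [InnerProductSpace 𝕜 H]
    [FiniteDimensional 𝕜 H] [Nontrivial H] {n : ℕ}
    (τ : OrthonormalBasis (Fin n) 𝕜 H) (ω : OrthonormalBasis (Fin n) 𝕜 H)
    (h : H) (hτ : ∀ j, (inner 𝕜 h (τ j) : 𝕜) ≠ 0) (hω : ∀ j, (inner 𝕜 h (ω j) : 𝕜) ≠ 0) :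
    (-∑ j, ‖(inner 𝕜 ((‖h‖ : 𝕜)⁻¹ • h) (τ j) : 𝕜)‖ ^ 2 *
        Real.log (‖(inner 𝕜 ((‖h‖ : 𝕜)⁻¹ • h) (τ j) : 𝕜)‖ ^ 2)) +
      (-∑ j, ‖(inner 𝕜 ((‖h‖ : 𝕜)⁻¹ • h) (ω j) : 𝕜)‖ ^ 2 *
        Real.log (‖(inner 𝕜 ((‖h‖ : 𝕜)⁻¹ • h) (ω j) : 𝕜)‖ ^ 2)) ≥
      -2 * Real.log ((1 + ⨆ j, ⨆ k, ‖(inner 𝕜 (τ j) (ω k) : 𝕜)‖) / 2) := by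
  have hn : 0 < n := by
    have h1 : Module.finrank 𝕜 H = n := by simpa using Module.finrank_eq_card_basis τ.toBasis
    have h2 := Module.finrank_pos (R := 𝕜) (M := H)
    omega
  have hh0 : h ≠ 0 := by
    intro h0
    exact hτ ⟨0, hn⟩ (by simp [h0])
  have hnh : (0:ℝ) < ‖h‖ := norm_pos_iff.mpr hh0
  set u : H := (‖h‖ : 𝕜)⁻¹ • h with hu_def
  have hu : ‖u‖ = 1 := by
    rw [hu_def, norm_smul, norm_inv, RCLike.norm_ofReal, abs_of_nonneg (norm_nonneg h)]
    field_simp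
  have hp1 : ∑ j, ‖(inner 𝕜 u (τ j) : 𝕜)‖ ^ 2 = 1 := by
    rw [aux_parseval, hu, one_pow]
  have hq1 : ∑ k, ‖(inner 𝕜 u (ω k) : 𝕜)‖ ^ 2 = 1 := by
    rw [aux_parseval, hu, one_pow]
  have hinner : ∀ x : H, (inner 𝕜 h x : 𝕜) ≠ 0 → (inner 𝕜 u x : 𝕜) ≠ 0 := by
    intro x hx
    rw [hu_def, inner_smul_left]
    refine mul_ne_zero ?_ hx
    simp only [map_inv₀, RCLike.conj_ofReal, ne_eq, inv_eq_zero, RCLike.ofReal_eq_zero]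
    exact hnh.ne'
  have hppos : ∀ j, 0 < ‖(inner 𝕜 u (τ j) : 𝕜)‖ ^ 2 := fun j =>
    pow_pos (norm_pos_iff.mpr (hinner (τ j) (hτ j))) 2
  have hqpos : ∀ k, 0 < ‖(inner 𝕜 u (ω k) : 𝕜)‖ ^ 2 := fun k =>
    pow_pos (norm_pos_iff.mpr (hinner (ω k) (hω k))) 2
  set b : ℝ := ⨆ j, ⨆ k, ‖(inner 𝕜 (τ j) (ω k) : 𝕜)‖ with hb_def
  have hble : ∀ j k, ‖(inner 𝕜 (τ j) (ω k) : 𝕜)‖ ≤ b := by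
    intro j k
    have h1 : ‖(inner 𝕜 (τ j) (ω k) : 𝕜)‖ ≤ ⨆ k, ‖(inner 𝕜 (τ j) (ω k) : 𝕜)‖ :=
      le_ciSup (f := fun k => ‖(inner 𝕜 (τ j) (ω k) : 𝕜)‖) (Set.finite_range _).bddAbove k
    have h2 : (⨆ k, ‖(inner 𝕜 (τ j) (ω k) : 𝕜)‖) ≤ b :=
      le_ciSup (f := fun j => ⨆ k, ‖(inner 𝕜 (τ j) (ω k) : 𝕜)‖) (Set.finite_range _).bddAbove j
    exact h1.trans h2
  have hb0 : (0:ℝ) ≤ b := le_trans (norm_nonneg _) (hble ⟨0, hn⟩ ⟨0, hn⟩)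
  have hM : (0:ℝ) < (1 + b) / 2 := by linarith
  have hkey : ∀ j k, ‖(inner 𝕜 u (τ j) : 𝕜)‖ ^ 2 * ‖(inner 𝕜 u (ω k) : 𝕜)‖ ^ 2
      ≤ ((1 + b) / 2) ^ 2 := by
    intro j k
    have h1 := aux_key (𝕜 := 𝕜) u (τ j) (ω k) hu (τ.orthonormal.1 j) (ω.orthonormal.1 k)
    have h2 : (1 + ‖(inner 𝕜 (τ j) (ω k) : 𝕜)‖) / 2 ≤ (1 + b) / 2 := by
      have := hble j k; linarith
    have h3 : ‖(inner 𝕜 u (τ j) : 𝕜)‖ * ‖(inner 𝕜 u (ω k) : 𝕜)‖ ≤ (1 + b) / 2 :=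
      h1.trans h2
    calc ‖(inner 𝕜 u (τ j) : 𝕜)‖ ^ 2 * ‖(inner 𝕜 u (ω k) : 𝕜)‖ ^ 2
        = (‖(inner 𝕜 u (τ j) : 𝕜)‖ * ‖(inner 𝕜 u (ω k) : 𝕜)‖) ^ 2 := by ring
      _ ≤ ((1 + b) / 2) ^ 2 := by
          have hnn : (0:ℝ) ≤ ‖(inner 𝕜 u (τ j) : 𝕜)‖ * ‖(inner 𝕜 u (ω k) : 𝕜)‖ := by positivity
          exact pow_le_pow_left₀ hnn h3 2
  exact aux_entropy (fun j => ‖(inner 𝕜 u (τ j) : 𝕜)‖ ^ 2)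
    (fun k => ‖(inner 𝕜 u (ω k) : 𝕜)‖ ^ 2) hppos hqpos hp1 hq1 hM hkey
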